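/- arXiv:2111.08432 — 3 statements merged into one kernel-verified Lean document; each statement's English description precedes it below -/
import Mathlib

section
/- Consider a commuting square of ring homomorphisms R → R₁, R → R₂, R₁ → R₁₂, R₂ → R₁₂ which is a gluing diagram, i.e. the sequence of R-modules 0 → R → R₁ ⊕ R₂ → R₁₂ → 0 (last map the difference of the two homomorphisms) is exact. Given a finite gluing datum (M₁, M₂, M₁₂, ψ₁, ψ₂) such that the natural map M ⊗_R R₁ → M₁ is surjective, where M := ker(ψ₁ - ψ₂ : M₁ ⊕ M₂ → M₁₂), then: (1) the map ψ₁ - ψ₂ : M₁ ⊕ M₂ → M₁₂ is surjective; (2) the map M ⊗_R R₂ → M₂ is surjective; (3) there exists a finitely generated R-submodule M₀ of M such that M₀ ⊗ R₁ → M₁ and M₀ ⊗ R₂ → M₂ are both surjective. -/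
open TensorProduct

lemma aux_finite_span {A N P : Type*} [CommRing A] [AddCommGroup N] [Module A N]
    [Module.Finite A N] [Nonempty P]
    (f : P → N) (S : Set P) (h : Submodule.span A (f '' S) = ⊤) :
    ∃ s : Finset P, ↑s ⊆ S ∧ Submodule.span A (f '' (s : Set P)) = ⊤ := by
  classical
  obtain ⟨G, hG⟩ := Module.Finite.fg_top (R := A) (M := N)
  have hmem : ∀ g : N, ∃ T : Finset N, ↑T ⊆ f '' S ∧ g ∈ Submodule.span A (T : Set N) := by
    intro g
    exact Submodule.mem_span_finite_of_mem_span (by rw [h]; trivial)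
  choose T hTsub hTmem using hmem
  set u : Finset N := G.biUnion T with hu
  have husub : ↑u ⊆ f '' S := by
    intro y hy
    rw [hu, Finset.coe_biUnion] at hy
    simp only [Set.mem_iUnion] at hy
    obtain ⟨g, _, hy⟩ := hy
    exact hTsub g hy
  have huspan : Submodule.span A (u : Set N) = ⊤ := by
    rw [eq_top_iff, ← hG, Submodule.span_le]
    intro g hg
    refine Submodule.span_mono ?_ (hTmem g)
    intro y hy
    rw [hu, Finset.coe_biUnion]
    exact Set.mem_iUnion.2 ⟨g, Set.mem_iUnion.2 ⟨hg, hy⟩⟩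
  have hchoice : ∀ y : N, ∃ p : P, y ∈ f '' S → p ∈ S ∧ f p = y := by
    intro y
    by_cases hy : y ∈ f '' S
    · obtain ⟨p, hp, hfp⟩ := hy
      exact ⟨p, fun _ => ⟨hp, hfp⟩⟩
    · exact ⟨Classical.arbitrary P, fun h' => absurd h' hy⟩
  choose g hg using hchoice
  refine ⟨u.image g, ?_, ?_⟩
  · intro p hp
    simp only [Finset.coe_image, Set.mem_image, Finset.mem_coe] at hp
    obtain ⟨y, hy, rfl⟩ := hp
    exact (hg y (husub hy)).1
  · rw [eq_top_iff, ← huspan, Submodule.span_le]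
    intro y hy
    refine Submodule.subset_span ⟨g y, ?_, (hg y (husub hy)).2⟩
    simp only [Finset.coe_image, Set.mem_image, Finset.mem_coe]
    exact ⟨y, hy, rfl⟩

/-- Kedlaya–Liu gluing lemma.  Given a gluing diagram of rings
`R → R₁, R₂ → R₁₂` (so that `0 → R → R₁ ⊕ R₂ → R₁₂ → 0` is exact) and a finite gluing
datum `(M₁, M₂, M₁₂, ψ₁, ψ₂)`, let `M = ker(ψ₁ - ψ₂ : M₁ ⊕ M₂ → M₁₂)`.
If the natural map `M ⊗_R R₁ → M₁` is surjective (equivalently, the image of `M` in `M₁`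
generates `M₁` over `R₁`), then:
(1) `ψ₁ - ψ₂ : M₁ ⊕ M₂ → M₁₂` is surjective;
(2) `M ⊗_R R₂ → M₂` is surjective;
(3) there is a finitely generated `R`-submodule `M₀ ⊆ M` (spanned by a finite subset `s`)
whose base changes to `R₁` and `R₂` surject onto `M₁` and `M₂`. -/
theorem gluing_datum_surjectivity
    {R R1 R2 R12 : Type*} [CommRing R] [CommRing R1] [CommRing R2] [CommRing R12]
    [Algebra R R1] [Algebra R R2] [Algebra R R12] [Algebra R1 R12] [Algebra R2 R12]
    [IsScalarTower R R1 R12] [IsScalarTower R R2 R12]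
    (hinj : Function.Injective fun r : R => (algebraMap R R1 r, algebraMap R R2 r))
    (hmid : ∀ (x1 : R1) (x2 : R2), algebraMap R1 R12 x1 = algebraMap R2 R12 x2 →
      ∃ r : R, algebraMap R R1 r = x1 ∧ algebraMap R R2 r = x2)
    (hsurjring : ∀ z : R12, ∃ (x1 : R1) (x2 : R2),
      algebraMap R1 R12 x1 - algebraMap R2 R12 x2 = z)
    {M1 M2 M12 : Type*}
    [AddCommGroup M1] [Module R1 M1] [Module.Finite R1 M1]
    [AddCommGroup M2] [Module R2 M2] [Module.Finite R2 M2]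
    [AddCommGroup M12] [Module R12 M12] [Module.Finite R12 M12]
    (ψ1 : (R12 ⊗[R1] M1) ≃ₗ[R12] M12) (ψ2 : (R12 ⊗[R2] M2) ≃ₗ[R12] M12)
    (M : Set (M1 × M2))
    (hM : M = {x : M1 × M2 | ψ1 ((1 : R12) ⊗ₜ[R1] x.1) = ψ2 ((1 : R12) ⊗ₜ[R2] x.2)})
    (hsur1 : Submodule.span R1 (Prod.fst '' M) = ⊤) :
    (∀ z : M12, ∃ (m1 : M1) (m2 : M2),
        ψ1 ((1 : R12) ⊗ₜ[R1] m1) - ψ2 ((1 : R12) ⊗ₜ[R2] m2) = z) ∧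
    (Submodule.span R2 (Prod.snd '' M) = ⊤) ∧
    (∃ s : Finset (M1 × M2), ↑s ⊆ M ∧
      Submodule.span R1 (Prod.fst '' (s : Set (M1 × M2))) = ⊤ ∧
      Submodule.span R2 (Prod.snd '' (s : Set (M1 × M2))) = ⊤) := by
  classical
  have tm1 : ∀ (x1 : R1) (a : M1), (1 : R12) ⊗ₜ[R1] (x1 • a)
      = algebraMap R1 R12 x1 • ((1 : R12) ⊗ₜ[R1] a) := by
    intro x1 a
    rw [TensorProduct.smul_tmul', smul_eq_mul, mul_one, ← TensorProduct.smul_tmul,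
      Algebra.smul_def, mul_one]
  have tm2 : ∀ (x2 : R2) (b : M2), (1 : R12) ⊗ₜ[R2] (x2 • b)
      = algebraMap R2 R12 x2 • ((1 : R12) ⊗ₜ[R2] b) := by
    intro x2 b
    rw [TensorProduct.smul_tmul', smul_eq_mul, mul_one, ← TensorProduct.smul_tmul,
      Algebra.smul_def, mul_one]
  set N2 : Submodule R2 M2 := Submodule.span R2 (Prod.snd '' M) with hN2
  set T : Set M12 := {w | ∃ m1 : M1, ∃ m2 : M2, m2 ∈ N2 ∧
    ψ1 ((1 : R12) ⊗ₜ[R1] m1) - ψ2 ((1 : R12) ⊗ₜ[R2] m2) = w} with hT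
  have T0 : (0 : M12) ∈ T := by
    refine ⟨0, 0, zero_mem _, ?_⟩
    simp
  have Tadd : ∀ w w' : M12, w ∈ T → w' ∈ T → w + w' ∈ T := by
    rintro w w' ⟨m1, m2, hm2, rfl⟩ ⟨n1, n2, hn2, rfl⟩
    refine ⟨m1 + n1, m2 + n2, add_mem hm2 hn2, ?_⟩
    simp only [TensorProduct.tmul_add, map_add]
    abel
  have Tsmul_psi : ∀ (z : R12) (m1 : M1), z • ψ1 ((1 : R12) ⊗ₜ[R1] m1) ∈ T := by
    intro z m1
    have hm1 : m1 ∈ Submodule.span R1 (Prod.fst '' M) := by rw [hsur1]; trivial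
    revert z
    induction hm1 using Submodule.span_induction with
    | mem a ha =>
      intro z
      obtain ⟨p, hp, rfl⟩ := ha
      obtain ⟨x1, x2, hx⟩ := hsurjring z
      have hpsi : ψ1 ((1 : R12) ⊗ₜ[R1] p.1) = ψ2 ((1 : R12) ⊗ₜ[R2] p.2) := by
        rw [hM] at hp; exact hp
      refine ⟨x1 • p.1, x2 • p.2,
        Submodule.smul_mem _ _ (Submodule.subset_span ⟨p, hp, rfl⟩), ?_⟩
      rw [tm1, tm2, map_smul, map_smul, ← hpsi, ← sub_smul, hx]
    | zero =>
      intro z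
      simpa using T0
    | add x y hx hy ihx ihy =>
      intro z
      have := Tadd _ _ (ihx z) (ihy z)
      simpa only [TensorProduct.tmul_add, map_add, smul_add] using this
    | smul r x hx ih =>
      intro z
      rw [tm1, map_smul, smul_smul]
      exact ih _
  have key : ∀ w : M12, ∃ m1 : M1, ∃ m2 : M2, m2 ∈ N2 ∧
      ψ1 ((1 : R12) ⊗ₜ[R1] m1) - ψ2 ((1 : R12) ⊗ₜ[R2] m2) = w := by
    intro w
    have hT' : ∀ t : R12 ⊗[R1] M1, (ψ1 t : M12) ∈ T := by
      intro t
      induction t using TensorProduct.induction_on with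
      | zero => simpa using T0
      | tmul z m =>
        have hzm : z ⊗ₜ[R1] m = z • ((1 : R12) ⊗ₜ[R1] m) := by
          rw [TensorProduct.smul_tmul', smul_eq_mul, mul_one]
        rw [hzm, map_smul]
        exact Tsmul_psi z m
      | add x y ihx ihy =>
        rw [map_add]
        exact Tadd _ _ ihx ihy
    have h := hT' (ψ1.symm w)
    rwa [LinearEquiv.apply_symm_apply] at h
  have hsur2 : Submodule.span R2 (Prod.snd '' M) = ⊤ := by
    rw [← hN2, eq_top_iff]
    intro m2 _
    obtain ⟨m1, n, hn, he⟩ := key (ψ2 ((1 : R12) ⊗ₜ[R2] m2))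
    have hmem : (m1, m2 + n) ∈ M := by
      rw [hM]
      show ψ1 ((1 : R12) ⊗ₜ[R1] m1) = ψ2 ((1 : R12) ⊗ₜ[R2] (m2 + n))
      rw [TensorProduct.tmul_add, map_add]
      rw [sub_eq_iff_eq_add] at he
      exact he
    have h1 : m2 + n ∈ N2 := Submodule.subset_span ⟨(m1, m2 + n), hmem, rfl⟩
    simpa using sub_mem h1 hn
  refine ⟨?_, hsur2, ?_⟩
  · intro z
    obtain ⟨m1, m2, _, he⟩ := key z
    exact ⟨m1, m2, he⟩
  · obtain ⟨s1, hs1M, hs1⟩ := aux_finite_span (Prod.fst) M hsur1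
    obtain ⟨s2, hs2M, hs2⟩ := aux_finite_span (Prod.snd) M hsur2
    refine ⟨s1 ∪ s2, ?_, ?_, ?_⟩
    · rw [Finset.coe_union]
      exact Set.union_subset hs1M hs2M
    · refine le_antisymm le_top ?_
      rw [← hs1]
      exact Submodule.span_mono (Set.image_mono (by simp [Finset.coe_union]))
    · refine le_antisymm le_top ?_
      rw [← hs2]
      exact Submodule.span_mono (Set.image_mono (by simp [Finset.coe_union]))
end

section
/- Let S̃ be a complete adic ring with ideal of definition I, let H be a profinite group acting continuously on S̃ by ring automorphisms, and let a > l₁ > 0 be integers. Suppose there is a 'TS1-type' trace element: for every open subgroup H₁ ⊂ H there exists α ∈ S̃^{H₁} with α·I^{l₁} ⊂ S̃₀ and Σ_{τ ∈ H/H₁} τ(α) = 1. If τ ↦ U_τ is a continuous 1-cocycle on H valued in GL_d(S̃) with U_τ - 1 ∈ M_d(I^a) for all τ ∈ H, then there exists M ∈ GL_d(S̃) with M - 1 ∈ M_d(I^{a-l₁}) such that the cocycle τ ↦ M^{-1} U_τ τ(M) satisfies M^{-1} U_τ τ(M) - 1 ∈ M_d(I^{a+1}) for all τ ∈ H. -/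
/-- Tate–Sen approximation, axiom (TS1) step.  Let `S̃` be a complete
adic ring with ideal of definition `I` and ring of definition `S̃₀`, endowed with a
continuous action of a profinite group `H`.  Assume the (TS1)-type trace hypothesis with
constant `l₁`.  If `τ ↦ U_τ` is a continuous `1`-cocycle on `H` valued in `GL_d(S̃)` with
`U_τ - 1 ∈ M_d(I^a)` for all `τ` (where `a > l₁`), then there is `M ∈ GL_d(S̃)` with
`M - 1 ∈ M_d(I^{a-l₁})` such that the cocycle `τ ↦ M⁻¹ U_τ τ(M)` satisfies
`M⁻¹ U_τ τ(M) - 1 ∈ M_d(I^{a+1})`. -/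
theorem tate_sen_approximation_step
    {St : Type*} [CommRing St] [TopologicalSpace St] [IsTopologicalRing St]
    (I : Ideal St) [IsAdicComplete I St] (S0 : Subring St)
    (hbasis : ∀ s : Set St, s ∈ nhds (0 : St) ↔ ∃ n : ℕ, ((I ^ n : Ideal St) : Set St) ⊆ s)
    {H : Type*} [Group H] [TopologicalSpace H] [IsTopologicalGroup H]
    [CompactSpace H] [TotallyDisconnectedSpace H] [T2Space H]
    [MulSemiringAction H St]
    (hact : Continuous fun q : H × St => q.1 • q.2)
    (l1 : ℕ) (hl1 : 0 < l1)
    (hTS1 : ∀ H1 : Subgroup H, IsOpen (H1 : Set H) →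
      ∃ α : St, (∀ τ ∈ H1, τ • α = α) ∧ (∀ x ∈ I ^ l1, α * x ∈ S0) ∧
        ∃ Q : Finset H, (∀ τ : H, ∃! σ : H, σ ∈ Q ∧ σ⁻¹ * τ ∈ H1) ∧
          (∑ σ ∈ Q, σ • α) = 1)
    (d : ℕ) (a : ℕ) (ha : l1 < a)
    (U : H → Matrix (Fin d) (Fin d) St)
    (hUcont : Continuous U)
    (hUunit : ∀ τ : H, IsUnit (U τ))
    (hUcoc : ∀ σ τ : H, U (σ * τ) = U σ * (U τ).map (σ • ·))
    (hUnear : ∀ τ : H, ∀ i j, (U τ - 1) i j ∈ I ^ a) :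
    ∃ M : Matrix (Fin d) (Fin d) St, IsUnit M ∧
      (∀ i j, (M - 1) i j ∈ I ^ (a - l1)) ∧
      ∀ τ : H, ∀ i j, (M⁻¹ * U τ * M.map (τ • ·) - 1) i j ∈ I ^ (a + 1) := by
  classical
  -- U 1 = 1
  have hU1 : U 1 = 1 := by
    have h := hUcoc 1 1
    have hmap : (U 1).map ((1 : H) • ·) = U 1 := by
      ext i j; simp [Matrix.map_apply]
    rw [hmap, one_mul] at h
    exact ((hUunit 1).mul_left_cancel (by rw [mul_one, ← h])).symm
  -- Step: uniform constant m with σ • I^m ⊆ I^(a+1) for all σ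
  have hpow_nhds : ∀ n : ℕ, ((I ^ n : Ideal St) : Set St) ∈ nhds (0 : St) := by
    intro n; rw [hbasis]; exact ⟨n, subset_rfl⟩
  obtain ⟨m, hm⟩ : ∃ m : ℕ, ∀ σ : H, ∀ x ∈ I ^ m, σ • x ∈ I ^ (a + 1) := by
    have hkey : ∀ σ : H, ∃ u ∈ nhds σ, ∃ v ∈ nhds (0 : St),
        u ×ˢ v ⊆ (fun q : H × St => q.1 • q.2) ⁻¹' ((I ^ (a + 1) : Ideal St) : Set St) := by
      intro σ
      have h0 : (fun q : H × St => q.1 • q.2) (σ, 0) = 0 := smul_zero σ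
      have hmem : (fun q : H × St => q.1 • q.2) ⁻¹' ((I ^ (a + 1) : Ideal St) : Set St)
          ∈ nhds ((σ, 0) : H × St) := by
        apply hact.continuousAt.preimage_mem_nhds
        simpa using hpow_nhds (a + 1)
      rcases mem_nhds_prod_iff.1 hmem with ⟨u, hu, v, hv, huv⟩
      exact ⟨u, hu, v, hv, huv⟩
    choose u hu v hv huv using hkey
    obtain ⟨t, -, ht⟩ := isCompact_univ.elim_nhds_subcover u (fun σ _ => hu σ)
    have hVmem : (⋂ σ ∈ t, v σ) ∈ nhds (0 : St) :=
      (Filter.biInter_mem t.finite_toSet).2 fun σ _ => hv σ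
    obtain ⟨m, hmI⟩ := (hbasis _).1 hVmem
    refine ⟨m, fun σ x hx => ?_⟩
    obtain ⟨σ₀, hσ₀t, hσ₀⟩ : ∃ σ₀ ∈ t, σ ∈ u σ₀ := by
      have := ht (Set.mem_univ σ)
      simpa using this
    have hxv : x ∈ v σ₀ := Set.mem_iInter₂.1 (hmI hx) σ₀ hσ₀t
    exact huv σ₀ (Set.mk_mem_prod hσ₀ hxv)
  -- Step: open subgroup H1 on which U is close to 1
  obtain ⟨H1, hH1open, hH1U⟩ : ∃ H1 : Subgroup H, IsOpen (H1 : Set H) ∧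
      ∀ h ∈ H1, ∀ i j, (U h - 1) i j ∈ I ^ m := by
    set W : Set H := {h : H | ∀ i j, (U h - 1) i j ∈ I ^ m} with hW
    have hWnhds : W ∈ nhds (1 : H) := by
      have : W = ⋂ i : Fin d, ⋂ j : Fin d, {h : H | (U h - 1) i j ∈ I ^ m} := by
        ext h; simp [hW, Set.mem_iInter]
      rw [this]
      refine Filter.iInter_mem.2 fun i => Filter.iInter_mem.2 fun j => ?_
      have hc : Continuous fun h : H => (U h - 1) i j := by
        have h1 : Continuous fun h : H => U h i j := by
          exact ((continuous_apply j).comp (continuous_apply i)).comp hUcont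
        simp only [Matrix.sub_apply]; exact h1.sub continuous_const
      have h0 : (fun h : H => (U h - 1) i j) 1 = 0 := by simp [hU1]
      have hm0 : ((I ^ m : Ideal St) : Set St) ∈ nhds ((fun h : H => (U h - 1) i j) 1) := by
        rw [h0]; exact hpow_nhds m
      exact hc.continuousAt (x := (1 : H)) |>.preimage_mem_nhds hm0
    obtain ⟨V, ⟨h1V, hVclopen⟩, hVW⟩ := (nhds_basis_clopen (1 : H)).mem_iff.1 hWnhds
    obtain ⟨K, hK⟩ := IsTopologicalGroup.exist_openNormalSubgroup_sub_clopen_nhds_of_one hVclopen h1V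
    exact ⟨K.toOpenSubgroup.toSubgroup, K.toOpenSubgroup.isOpen,
      fun h hh => hVW (hK hh)⟩
  -- TS1 data
  obtain ⟨α, hαinv, -, Q, hQ, htrace⟩ := hTS1 H1 hH1open
  -- representative function
  let r : H → H := fun g => (hQ g).exists.choose
  have hrQ : ∀ g : H, r g ∈ Q := fun g => (hQ g).exists.choose_spec.1
  have hrH1 : ∀ g : H, (r g)⁻¹ * g ∈ H1 := fun g => (hQ g).exists.choose_spec.2
  have hr_eq : ∀ g ρ : H, ρ ∈ Q → ρ⁻¹ * g ∈ H1 → r g = ρ := by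
    intro g ρ hρQ hρg
    obtain ⟨σ, hσ, huniq⟩ := hQ g
    rw [huniq (r g) ⟨hrQ g, hrH1 g⟩, huniq ρ ⟨hρQ, hρg⟩]
  -- the matrices F g and M
  set F : H → Matrix (Fin d) (Fin d) St := fun g => (g • α) • U g with hF
  set M : Matrix (Fin d) (Fin d) St := ∑ σ ∈ Q, F σ with hMdef
  -- entries of M - 1 lie in I^a
  have hM1 : ∀ i j, (M - 1) i j ∈ I ^ a := by
    intro i j
    have hrw : (M - 1) i j = ∑ σ ∈ Q, (σ • α) * ((U σ - 1) i j) := by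
      have h1 : (1 : Matrix (Fin d) (Fin d) St) i j
          = ∑ σ ∈ Q, (σ • α) * ((1 : Matrix (Fin d) (Fin d) St) i j) := by
        rw [← Finset.sum_mul, htrace, one_mul]
      rw [Matrix.sub_apply, hMdef, Matrix.sum_apply]
      rw [h1, ← Finset.sum_sub_distrib]
      refine Finset.sum_congr rfl fun σ _ => ?_
      simp [hF, Matrix.smul_apply, Matrix.sub_apply, smul_eq_mul, mul_sub]
    rw [hrw]
    exact Ideal.sum_mem _ fun σ _ => Ideal.mul_mem_left _ _ (hUnear σ i j)
  -- key pointwise estimate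
  have hterm : ∀ g : H, ∀ i j, (F g - F (r g)) i j ∈ I ^ (a + 1) := by
    intro g i j
    have hh : (r g)⁻¹ * g ∈ H1 := hrH1 g
    have hgρ : g = r g * ((r g)⁻¹ * g) := by group
    have hα : g • α = r g • α := by
      conv_lhs => rw [hgρ]
      rw [mul_smul, hαinv _ hh]
    have hUg : U g = U (r g) * (U ((r g)⁻¹ * g)).map (r g • ·) := by
      conv_lhs => rw [hgρ]
      exact hUcoc _ _
    have hmap1 : ((1 : Matrix (Fin d) (Fin d) St)).map (r g • ·)
        = (1 : Matrix (Fin d) (Fin d) St) :=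
      Matrix.map_one _ (smul_zero _) (smul_eq_iff_eq_inv_smul (r g) |>.2 (by simp))
    have hid : F g - F (r g)
        = (r g • α) • (U (r g) * ((U ((r g)⁻¹ * g) - 1).map (r g • ·))) := by
      rw [hF]
      simp only [hα, hUg]
      rw [Matrix.map_sub _ (fun x y => smul_sub (r g) x y), hmap1, mul_sub, mul_one,
        smul_sub]
    rw [hid, Matrix.smul_apply, Matrix.mul_apply, smul_eq_mul]
    refine Ideal.mul_mem_left _ _ (Ideal.sum_mem _ fun k _ => Ideal.mul_mem_left _ _ ?_)
    rw [Matrix.map_apply]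
    exact hm _ _ (hH1U _ hh k j)
  -- reindexing: sum over Q of F ∘ r ∘ (τ * ·) equals M
  have hM_reindex : ∀ τ : H, ∑ σ ∈ Q, F (r (τ * σ)) = M := by
    intro τ
    refine Finset.sum_nbij' (i := fun σ => r (τ * σ)) (j := fun σ => r (τ⁻¹ * σ))
      (fun σ _ => hrQ _) (fun σ _ => hrQ _) ?_ ?_ (fun σ _ => rfl)
    · intro σ hσ
      refine hr_eq _ _ hσ ?_
      have h := hrH1 (τ * σ)
      have hgrp : σ⁻¹ * (τ⁻¹ * r (τ * σ)) = ((r (τ * σ))⁻¹ * (τ * σ))⁻¹ := by group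
      rw [hgrp]; exact inv_mem h
    · intro σ hσ
      refine hr_eq _ _ hσ ?_
      have h := hrH1 (τ⁻¹ * σ)
      have hgrp : σ⁻¹ * (τ * r (τ⁻¹ * σ)) = ((r (τ⁻¹ * σ))⁻¹ * (τ⁻¹ * σ))⁻¹ := by group
      rw [hgrp]; exact inv_mem h
  -- twisted sum expansion
  have hUτM : ∀ τ : H, U τ * M.map (τ • ·) = ∑ σ ∈ Q, F (τ * σ) := by
    intro τ
    have hmapM : M.map (τ • ·) = ∑ σ ∈ Q, ((τ * σ) • α) • (U σ).map (τ • ·) := by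
      ext i j
      rw [Matrix.map_apply, hMdef, Matrix.sum_apply, Finset.smul_sum, Matrix.sum_apply]
      refine Finset.sum_congr rfl fun σ _ => ?_
      simp only [hF, Matrix.smul_apply, smul_eq_mul, Matrix.map_apply, smul_mul',
        mul_smul]
    rw [hmapM, Finset.mul_sum]
    refine Finset.sum_congr rfl fun σ _ => ?_
    rw [Matrix.mul_smul, ← hUcoc, hF]
  -- entries of U τ • τ(M) - M lie in I^(a+1)
  have hE : ∀ τ : H, ∀ i j, (U τ * M.map (τ • ·) - M) i j ∈ I ^ (a + 1) := by
    intro τ i j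
    have : U τ * M.map (τ • ·) - M = ∑ σ ∈ Q, (F (τ * σ) - F (r (τ * σ))) := by
      rw [hUτM, ← hM_reindex τ, Finset.sum_sub_distrib]
    rw [this, Matrix.sum_apply]
    exact Ideal.sum_mem _ fun σ _ => hterm (τ * σ) i j
  -- M is invertible
  have hdet : M.det - 1 ∈ I ^ a := by
    have hMmap : M.map (Ideal.Quotient.mk (I ^ a)) = (1 : Matrix (Fin d) (Fin d) (St ⧸ I ^ a)) := by
      ext i j
      rw [Matrix.map_apply]
      have h1 : (Ideal.Quotient.mk (I ^ a)) (M i j) = (Ideal.Quotient.mk (I ^ a)) ((1 : Matrix (Fin d) (Fin d) St) i j) := by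
        rw [Ideal.Quotient.mk_eq_mk_iff_sub_mem]
        simpa [Matrix.sub_apply] using hM1 i j
      rw [h1]
      simp [Matrix.one_apply, apply_ite (Ideal.Quotient.mk (I ^ a))]
    have h1 : (Ideal.Quotient.mk (I ^ a)) M.det = 1 := by rw [RingHom.map_det, RingHom.mapMatrix_apply, hMmap, Matrix.det_one]
    have h0 : (Ideal.Quotient.mk (I ^ a)) (M.det - 1) = 0 := by rw [map_sub, h1, map_one, sub_self]
    exact (Ideal.Quotient.eq_zero_iff_mem).1 h0
  have hdetunit : IsUnit M.det := by
    refine Ideal.isUnit_of_sub_one_mem_jacobson_bot _ ?_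
    exact IsAdicComplete.le_jacobson_bot I
      (Ideal.pow_le_self (by omega : a ≠ 0) hdet)
  have hMunit : IsUnit M := (Matrix.isUnit_iff_isUnit_det M).2 hdetunit
  refine ⟨M, hMunit, fun i j => Ideal.pow_le_pow_right (Nat.sub_le a l1) (hM1 i j), ?_⟩
  intro τ i j
  have hinv : M⁻¹ * M = 1 := Matrix.nonsing_inv_mul M hdetunit
  have key : M⁻¹ * U τ * M.map (τ • ·) - 1 = M⁻¹ * (U τ * M.map (τ • ·) - M) := by
    rw [mul_sub, hinv, mul_assoc]
  rw [key, Matrix.mul_apply]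
  exact Ideal.sum_mem _ fun k _ => Ideal.mul_mem_left _ _ (hE τ k j)
end

section
/- (Iterated Tate-Sen trivialization) Under the hypotheses of the previous approximation lemma (TS1 trace elements with constant l₁, continuous cocycle U on H valued in GL_d(S̃) with U_τ - 1 ∈ M_d(I^a), a > l₁, and S̃ complete for the I-adic topology), there exists M ∈ GL_d(S̃) with M - 1 ∈ M_d(I^{a-l₁}) such that M^{-1} U_σ σ(M) = 1 for all σ ∈ H; i.e., the cocycle becomes trivial. -/
namespace TateSenAux

open Matrix Finset

variable {St : Type*} [CommRing St] {d : ℕ}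

lemma entry_mul_right {J : Ideal St} (A B : Matrix (Fin d) (Fin d) St)
    (h : ∀ i j, B i j ∈ J) (i j : Fin d) : (A * B) i j ∈ J := by
  rw [Matrix.mul_apply]
  exact Ideal.sum_mem _ fun k _ => Ideal.mul_mem_left _ _ (h k j)

lemma isUnit_of_entries (I : Ideal St) [IsAdicComplete I St]
    (A : Matrix (Fin d) (Fin d) St) (h : ∀ i j, (A - 1) i j ∈ I) : IsUnit A := by
  rw [Matrix.isUnit_iff_isUnit_det]
  have hdet : A.det - 1 ∈ I := by
    have hmap : A.map (Ideal.Quotient.mk I) = 1 := by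
      ext i j
      have h0 : (Ideal.Quotient.mk I) ((A - 1) i j) = 0 := Ideal.Quotient.eq_zero_iff_mem.mpr (h i j)
      rw [Matrix.sub_apply, map_sub, sub_eq_zero] at h0
      simp only [Matrix.map_apply, Matrix.one_apply, h0, apply_ite (Ideal.Quotient.mk I),
        _root_.map_one, _root_.map_zero]
    have hdm := (Ideal.Quotient.mk I).map_det A
    rw [show (Ideal.Quotient.mk I).mapMatrix A = A.map (Ideal.Quotient.mk I) from rfl,
      hmap, Matrix.det_one] at hdm
    have h1 : (Ideal.Quotient.mk I) A.det = (Ideal.Quotient.mk I) 1 := by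
      simpa using hdm
    rwa [Ideal.Quotient.mk_eq_mk_iff_sub_mem] at h1
  exact Ideal.isUnit_of_sub_one_mem_jacobson_bot _ (IsAdicComplete.le_jacobson_bot I hdet)

variable {H : Type*} [Group H] [MulSemiringAction H St]

lemma mapS_one (σ : H) : (1 : Matrix (Fin d) (Fin d) St).map (σ • ·) = 1 := by
  ext i j
  simp [Matrix.map_apply, Matrix.one_apply, apply_ite (σ • ·)]

lemma mapS_mul (σ : H) (A B : Matrix (Fin d) (Fin d) St) :
    (A * B).map (σ • ·) = A.map (σ • ·) * B.map (σ • ·) := by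
  ext i j
  simp [Matrix.map_apply, Matrix.mul_apply, Finset.smul_sum, smul_mul']

lemma mapS_sub (σ : H) (A B : Matrix (Fin d) (Fin d) St) :
    (A - B).map (σ • ·) = A.map (σ • ·) - B.map (σ • ·) := by
  ext i j
  simp [Matrix.map_apply, smul_sub]

lemma mapS_comp (σ τ : H) (A : Matrix (Fin d) (Fin d) St) :
    (A.map (τ • ·)).map (σ • ·) = A.map ((σ * τ) • ·) := by
  ext i j
  simp [Matrix.map_apply, mul_smul]

lemma mapS_smul (σ : H) (c : St) (A : Matrix (Fin d) (Fin d) St) :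
    (c • A).map (σ • ·) = (σ • c) • A.map (σ • ·) := by
  ext i j
  simp [Matrix.map_apply, Matrix.smul_apply, smul_eq_mul, smul_mul']

lemma mapS_sum {ι : Type*} (σ : H) (s : Finset ι) (A : ι → Matrix (Fin d) (Fin d) St) :
    (∑ x ∈ s, A x).map (σ • ·) = ∑ x ∈ s, (A x).map (σ • ·) := by
  ext i j
  simp [Matrix.map_apply, Matrix.sum_apply, Finset.smul_sum]

lemma step {St : Type*} [CommRing St] [TopologicalSpace St] [IsTopologicalRing St]
    (I : Ideal St) [IsAdicComplete I St]
    {H : Type*} [Group H] [TopologicalSpace H] [MulSemiringAction H St]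
    (hact : Continuous fun q : H × St => q.1 • q.2)
    (hopen : ∀ n : ℕ, IsOpen ((I ^ n : Ideal St) : Set St))
    (hstab : ∀ k : ℕ, ∃ m : ℕ, ∀ σ : H, ∀ x ∈ I ^ m, σ • x ∈ I ^ k)
    (hsub : ∀ s : Set H, IsOpen s → (1 : H) ∈ s →
      ∃ H1 : Subgroup H, IsOpen (H1 : Set H) ∧ (H1 : Set H) ⊆ s)
    (hTS : ∀ H1 : Subgroup H, IsOpen (H1 : Set H) →
      ∃ α : St, (∀ τ ∈ H1, τ • α = α) ∧
        ∃ Q : Finset H, (∀ τ : H, ∃! σ : H, σ ∈ Q ∧ σ⁻¹ * τ ∈ H1) ∧ (∑ σ ∈ Q, σ • α) = 1)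
    {d b : ℕ} (hb : 1 ≤ b)
    (V : H → Matrix (Fin d) (Fin d) St)
    (hVcont : Continuous V) (hVunit : ∀ τ, IsUnit (V τ))
    (hVcoc : ∀ σ τ, V (σ * τ) = V σ * (V τ).map (σ • ·))
    (hVnear : ∀ τ, ∀ i j, (V τ - 1) i j ∈ I ^ b) :
    ∃ q : Matrix (Fin d) (Fin d) St × (H → Matrix (Fin d) (Fin d) St),
      IsUnit q.1 ∧ (∀ i j, (q.1 - 1) i j ∈ I ^ b) ∧
      Continuous q.2 ∧ (∀ τ, IsUnit (q.2 τ)) ∧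
      (∀ σ τ, q.2 (σ * τ) = q.2 σ * (q.2 τ).map (σ • ·)) ∧
      (∀ τ, ∀ i j, (q.2 τ - 1) i j ∈ I ^ (b + 1)) ∧
      (∀ τ, V τ * q.1.map (τ • ·) = q.1 * q.2 τ) := by
  classical
  have hV1 : V 1 = 1 := by
    have h := hVcoc 1 1
    rw [one_mul] at h
    have hmap : (V 1).map ((1 : H) • ·) = V 1 := by
      ext i j; simp [Matrix.map_apply]
    rw [hmap] at h
    refine ((hVunit 1).mul_left_cancel ?_).symm
    rw [mul_one, ← h]
  obtain ⟨m, hm⟩ := hstab (b + 1)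
  have hsopen : IsOpen {τ : H | ∀ i j, (V τ - 1) i j ∈ I ^ m} := by
    have hset : {τ : H | ∀ i j, (V τ - 1) i j ∈ I ^ m} =
        ⋂ i, ⋂ j, (fun τ => (V τ - 1) i j) ⁻¹' ((I ^ m : Ideal St) : Set St) := by
      ext τ; simp [Set.mem_iInter, Set.mem_preimage, SetLike.mem_coe]
    rw [hset]
    refine isOpen_iInter_of_finite fun i => isOpen_iInter_of_finite fun j => ?_
    exact (hopen m).preimage ((hVcont.sub continuous_const).matrix_elem i j)
  have h1s : (1 : H) ∈ {τ : H | ∀ i j, (V τ - 1) i j ∈ I ^ m} := by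
    intro i j
    simp only [hV1, sub_self, Matrix.zero_apply]
    exact Ideal.zero_mem _
  obtain ⟨H1, hH1open, hH1s⟩ := hsub _ hsopen h1s
  obtain ⟨α, hαfix, Q, hQ, hQsum⟩ := hTS H1 hH1open
  set ρ : H → H := fun t => (hQ t).choose with hρ
  have hρmem : ∀ t, ρ t ∈ Q := fun t => (hQ t).choose_spec.1.1
  have hρH1 : ∀ t, (ρ t)⁻¹ * t ∈ H1 := fun t => (hQ t).choose_spec.1.2
  have hρuniq : ∀ t σ, σ ∈ Q → σ⁻¹ * t ∈ H1 → σ = ρ t :=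
    fun t σ h1 h2 => (hQ t).choose_spec.2 σ ⟨h1, h2⟩
  have hρinv1 : ∀ (τ σ : H), σ ∈ Q → ρ (τ⁻¹ * ρ (τ * σ)) = σ := by
    intro τ σ hσ
    refine (hρuniq _ σ hσ ?_).symm
    have he : σ⁻¹ * (τ⁻¹ * ρ (τ * σ)) = ((ρ (τ * σ))⁻¹ * (τ * σ))⁻¹ := by group
    rw [he]
    exact H1.inv_mem (hρH1 (τ * σ))
  have hρinv2 : ∀ (τ σ' : H), σ' ∈ Q → ρ (τ * ρ (τ⁻¹ * σ')) = σ' := by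
    intro τ σ' hσ'
    refine (hρuniq _ σ' hσ' ?_).symm
    have he : σ'⁻¹ * (τ * ρ (τ⁻¹ * σ')) = ((ρ (τ⁻¹ * σ'))⁻¹ * (τ⁻¹ * σ'))⁻¹ := by group
    rw [he]
    exact H1.inv_mem (hρH1 _)
  set M : Matrix (Fin d) (Fin d) St := ∑ σ ∈ Q, (σ • α) • V σ with hMdef
  have hMnear : ∀ i j, (M - 1) i j ∈ I ^ b := by
    intro i j
    have hM1 : M - 1 = ∑ σ ∈ Q, (σ • α) • (V σ - 1) := by
      rw [hMdef,
        show (∑ σ ∈ Q, (σ • α) • (V σ - 1)) =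
          ∑ σ ∈ Q, ((σ • α) • V σ - (σ • α) • (1 : Matrix (Fin d) (Fin d) St)) from
          Finset.sum_congr rfl fun σ _ => smul_sub _ _ _,
        Finset.sum_sub_distrib, ← Finset.sum_smul, hQsum, one_smul]
    rw [hM1, Matrix.sum_apply]
    refine Ideal.sum_mem _ fun σ _ => ?_
    rw [Matrix.smul_apply, smul_eq_mul]
    exact Ideal.mul_mem_left _ _ (hVnear σ i j)
  have hMunit : IsUnit M :=
    isUnit_of_entries I M fun i j =>
      Ideal.pow_le_self (by omega) (hMnear i j)
  have hMdet : IsUnit M.det := (Matrix.isUnit_iff_isUnit_det M).mp hMunit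
  have hkey : ∀ τ : H, ∀ i j, (V τ * M.map (τ • ·) - M) i j ∈ I ^ (b + 1) := by
    intro τ i j
    have e1 : V τ * M.map (τ • ·) = ∑ σ ∈ Q, ((τ * σ) • α) • V (τ * σ) := by
      rw [hMdef, mapS_sum, Matrix.mul_sum]
      refine Finset.sum_congr rfl fun σ _ => ?_
      rw [mapS_smul, Matrix.mul_smul, ← hVcoc τ σ, mul_smul]
    have e2 : M = ∑ σ ∈ Q, ((ρ (τ * σ)) • α) • V (ρ (τ * σ)) := by
      rw [hMdef]
      refine Finset.sum_nbij' (fun σ => ρ (τ⁻¹ * σ)) (fun σ => ρ (τ * σ))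
        (fun σ _ => hρmem _) (fun σ _ => hρmem _)
        (fun σ hσ => hρinv2 τ σ hσ) (fun σ hσ => hρinv1 τ σ hσ) ?_
      intro σ hσ
      rw [hρinv2 τ σ hσ]
    have e3 : V τ * M.map (τ • ·) - M =
        ∑ σ ∈ Q, (((τ * σ) • α) • V (τ * σ) - ((ρ (τ * σ)) • α) • V (ρ (τ * σ))) := by
      rw [e1]
      nth_rewrite 1 [e2]
      rw [← Finset.sum_sub_distrib]
    rw [e3, Matrix.sum_apply]
    refine Ideal.sum_mem _ fun σ _ => ?_
    have hgH1 : (ρ (τ * σ))⁻¹ * (τ * σ) ∈ H1 := hρH1 (τ * σ)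
    set g : H := (ρ (τ * σ))⁻¹ * (τ * σ) with hgdef
    have hτσ : τ * σ = ρ (τ * σ) * g := by rw [hgdef]; group
    have hα : (τ * σ) • α = (ρ (τ * σ)) • α := by
      conv_lhs => rw [hτσ]
      rw [mul_smul, hαfix g hgH1]
    have hVτσ : V (τ * σ) = V (ρ (τ * σ)) * (V g).map ((ρ (τ * σ)) • ·) := by
      conv_lhs => rw [hτσ]
      rw [hVcoc]
    have hterm : ((τ * σ) • α) • V (τ * σ) - ((ρ (τ * σ)) • α) • V (ρ (τ * σ)) =
        ((ρ (τ * σ)) • α) • (V (ρ (τ * σ)) * ((V g - 1).map ((ρ (τ * σ)) • ·))) := by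
      rw [hα, hVτσ, ← smul_sub, mapS_sub, mapS_one, Matrix.mul_sub, Matrix.mul_one]
    rw [hterm, Matrix.smul_apply, smul_eq_mul]
    refine Ideal.mul_mem_left _ _ ?_
    refine entry_mul_right _ _ (fun i' j' => ?_) i j
    rw [Matrix.map_apply]
    exact hm _ _ (hH1s hgH1 i' j')
  have hrel : ∀ τ : H, V τ * M.map (τ • ·) = M * (M⁻¹ * (V τ * M.map (τ • ·))) := by
    intro τ
    rw [← Matrix.mul_assoc, Matrix.mul_nonsing_inv _ hMdet, Matrix.one_mul]
  have hWnear : ∀ τ : H, ∀ i j, (M⁻¹ * (V τ * M.map (τ • ·)) - 1) i j ∈ I ^ (b + 1) := by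
    intro τ i j
    have hw : M⁻¹ * (V τ * M.map (τ • ·)) - 1 = M⁻¹ * (V τ * M.map (τ • ·) - M) := by
      rw [Matrix.mul_sub, Matrix.nonsing_inv_mul _ hMdet]
    rw [hw]
    exact entry_mul_right _ _ (hkey τ) i j
  have hMinvmap : ∀ σ : H, (M.map (σ • ·)) * (M⁻¹.map (σ • ·)) = 1 := by
    intro σ
    rw [← mapS_mul, Matrix.mul_nonsing_inv _ hMdet, mapS_one]
  refine ⟨⟨M, fun τ => M⁻¹ * (V τ * M.map (τ • ·))⟩, hMunit, hMnear, ?_, ?_, ?_, hWnear,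
    fun τ => hrel τ⟩
  · -- continuity
    have hmapcont : Continuous fun τ : H => M.map (τ • ·) := by
      apply continuous_matrix
      intro i j
      show Continuous fun τ : H => τ • M i j
      exact hact.comp (continuous_id.prodMk continuous_const)
    exact continuous_const.matrix_mul (hVcont.matrix_mul hmapcont)
  · -- units
    intro τ
    exact isUnit_of_entries I _ fun i j => Ideal.pow_le_self (by omega) (hWnear τ i j)
  · -- cocycle
    intro σ τ
    show M⁻¹ * (V (σ * τ) * M.map ((σ * τ) • ·)) =
      (M⁻¹ * (V σ * M.map (σ • ·))) * ((M⁻¹ * (V τ * M.map (τ • ·))).map (σ • ·))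
    rw [hVcoc σ τ, mapS_mul σ M⁻¹ _, mapS_mul σ (V τ) _, mapS_comp σ τ M]
    simp only [Matrix.mul_assoc]
    congr 1
    congr 1
    rw [← Matrix.mul_assoc (M.map (σ • ·)), hMinvmap σ, Matrix.one_mul]

end TateSenAux


/-- iterated Tate–Sen trivialization.  Let `S̃` be a complete
adic ring with ideal of definition `I` and ring of definition `S̃₀`, endowed with a
continuous action of a profinite group `H`.  Assume the (TS1)-type trace hypothesis with
constant `l₁`.  If `τ ↦ U_τ` is a continuous `1`-cocycle on `H` valued in `GL_d(S̃)` with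
`U_τ - 1 ∈ M_d(I^a)` for all `τ` (where `a > l₁`), then there is `M ∈ GL_d(S̃)` with
`M - 1 ∈ M_d(I^{a-l₁})` such that `M⁻¹ U_σ σ(M) = 1` for all `σ ∈ H`, i.e. the cocycle
becomes trivial. -/
theorem tate_sen_cocycle_trivialization
    {St : Type*} [CommRing St] [TopologicalSpace St] [IsTopologicalRing St]
    (I : Ideal St) [IsAdicComplete I St] (S0 : Subring St)
    (hbasis : ∀ s : Set St, s ∈ nhds (0 : St) ↔ ∃ n : ℕ, ((I ^ n : Ideal St) : Set St) ⊆ s)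
    {H : Type*} [Group H] [TopologicalSpace H] [IsTopologicalGroup H]
    [CompactSpace H] [TotallyDisconnectedSpace H] [T2Space H]
    [MulSemiringAction H St]
    (hact : Continuous fun q : H × St => q.1 • q.2)
    (l1 : ℕ) (hl1 : 0 < l1)
    (hTS1 : ∀ H1 : Subgroup H, IsOpen (H1 : Set H) →
      ∃ α : St, (∀ τ ∈ H1, τ • α = α) ∧ (∀ x ∈ I ^ l1, α * x ∈ S0) ∧
        ∃ Q : Finset H, (∀ τ : H, ∃! σ : H, σ ∈ Q ∧ σ⁻¹ * τ ∈ H1) ∧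
          (∑ σ ∈ Q, σ • α) = 1)
    (d : ℕ) (a : ℕ) (ha : l1 < a)
    (U : H → Matrix (Fin d) (Fin d) St)
    (hUcont : Continuous U)
    (hUunit : ∀ τ : H, IsUnit (U τ))
    (hUcoc : ∀ σ τ : H, U (σ * τ) = U σ * (U τ).map (σ • ·))
    (hUnear : ∀ τ : H, ∀ i j, (U τ - 1) i j ∈ I ^ a) :
    ∃ M : Matrix (Fin d) (Fin d) St, IsUnit M ∧
      (∀ i j, (M - 1) i j ∈ I ^ (a - l1)) ∧
      ∀ σ : H, M⁻¹ * U σ * M.map (σ • ·) = 1 := by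
  classical
  -- openness of the powers of I
  have hopen : ∀ n : ℕ, IsOpen ((I ^ n : Ideal St) : Set St) := by
    intro n
    have hmem : ((I ^ n : Ideal St) : Set St) ∈ nhds (0 : St) := (hbasis _).mpr ⟨n, subset_rfl⟩
    exact AddSubgroup.isOpen_of_mem_nhds (I ^ n).toAddSubgroup hmem
  -- uniform stability of powers of I under the action
  have hstab : ∀ k : ℕ, ∃ m : ℕ, ∀ σ : H, ∀ x ∈ I ^ m, σ • x ∈ I ^ k := by
    intro k
    have hn : IsOpen ((fun q : H × St => q.1 • q.2) ⁻¹' ((I ^ k : Ideal St) : Set St)) :=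
      (hopen k).preimage hact
    have hsub0 : (Set.univ : Set H) ×ˢ ({0} : Set St) ⊆
        (fun q : H × St => q.1 • q.2) ⁻¹' ((I ^ k : Ideal St) : Set St) := by
      rintro ⟨σ, x⟩ ⟨-, hx⟩
      simp only [Set.mem_singleton_iff] at hx
      subst hx
      simp only [Set.mem_preimage, smul_zero, SetLike.mem_coe]
      exact Ideal.zero_mem _
    obtain ⟨u, v, hu, hv, huu, hvv, huv⟩ :=
      generalized_tube_lemma isCompact_univ isCompact_singleton hn hsub0
    obtain ⟨m, hmv⟩ := (hbasis v).mp (hv.mem_nhds (hvv rfl))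
    refine ⟨m, fun σ x hx => ?_⟩
    have h := huv (Set.mk_mem_prod (huu (Set.mem_univ σ)) (hmv hx))
    simpa using h
  -- open subgroups inside open neighbourhoods of 1
  have hsub : ∀ s : Set H, IsOpen s → (1 : H) ∈ s →
      ∃ H1 : Subgroup H, IsOpen (H1 : Set H) ∧ (H1 : Set H) ⊆ s := by
    intro s hs h1
    obtain ⟨W, hWclopen, h1W, hWs⟩ := compact_exists_isClopen_in_isOpen hs h1
    obtain ⟨H1, hH1⟩ :=
      IsTopologicalGroup.exist_openNormalSubgroup_sub_clopen_nhds_of_one hWclopen h1W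
    exact ⟨H1.toOpenSubgroup.toSubgroup, H1.toOpenSubgroup.isOpen, fun x hx => hWs (hH1 hx)⟩
  -- the trace hypothesis without the ring-of-definition part
  have hTS' : ∀ H1 : Subgroup H, IsOpen (H1 : Set H) →
      ∃ α : St, (∀ τ ∈ H1, τ • α = α) ∧
        ∃ Q : Finset H, (∀ τ : H, ∃! σ : H, σ ∈ Q ∧ σ⁻¹ * τ ∈ H1) ∧ (∑ σ ∈ Q, σ • α) = 1 := by
    intro H1 h
    obtain ⟨α, h1, -, Q, h3, h4⟩ := hTS1 H1 h
    exact ⟨α, h1, Q, h3, h4⟩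
  have ha1 : 1 ≤ a := by omega
  -- iterated single-step approximation
  set Good : ℕ → (H → Matrix (Fin d) (Fin d) St) → Prop := fun n V =>
    Continuous V ∧ (∀ τ, IsUnit (V τ)) ∧ (∀ σ τ, V (σ * τ) = V σ * (V τ).map (σ • ·)) ∧
      (∀ τ, ∀ i j, (V τ - 1) i j ∈ I ^ (a + n)) with hGooddef
  have hstepEx : ∀ (n : ℕ) (V : H → Matrix (Fin d) (Fin d) St),
      ∃ q : Matrix (Fin d) (Fin d) St × (H → Matrix (Fin d) (Fin d) St), Good n V →
        (IsUnit q.1 ∧ (∀ i j, (q.1 - 1) i j ∈ I ^ (a + n)) ∧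
          Good (n + 1) q.2 ∧ (∀ τ, V τ * q.1.map (τ • ·) = q.1 * q.2 τ)) := by
    intro n V
    by_cases h : Good n V
    · obtain ⟨q, h1, h2, h3, h4, h5, h6, h7⟩ :=
        TateSenAux.step I hact hopen hstab hsub hTS' (d := d) (b := a + n) (by omega)
          V h.1 h.2.1 h.2.2.1 h.2.2.2
      exact ⟨q, fun _ => ⟨h1, h2, ⟨h3, h4, h5, h6⟩, h7⟩⟩
    · exact ⟨⟨1, fun _ => 1⟩, fun h' => (h h').elim⟩
  choose stp hstp using hstepEx
  let f : ℕ → (H → Matrix (Fin d) (Fin d) St) × Matrix (Fin d) (Fin d) St := fun n =>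
    Nat.rec (⟨U, 1⟩ : (H → Matrix (Fin d) (Fin d) St) × Matrix (Fin d) (Fin d) St)
      (fun n p => ⟨(stp n p.1).2, p.2 * (stp n p.1).1⟩) n
  have hfs : ∀ n, f (n + 1) = ⟨(stp n (f n).1).2, (f n).2 * (stp n (f n).1).1⟩ := fun n => rfl
  set Inv : ℕ → (H → Matrix (Fin d) (Fin d) St) × Matrix (Fin d) (Fin d) St → Prop :=
    fun n p => Good n p.1 ∧ IsUnit p.2 ∧ (∀ i j, (p.2 - 1) i j ∈ I ^ a) ∧
      (∀ σ, U σ * p.2.map (σ • ·) = p.2 * p.1 σ) with hInvdef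
  have hGood0 : Good 0 U := ⟨hUcont, hUunit, hUcoc, fun τ i j => hUnear τ i j⟩
  have hInv : ∀ n, Inv n (f n) := by
    intro n
    induction n with
    | zero =>
      rw [show f 0 = (U, (1 : Matrix (Fin d) (Fin d) St)) from rfl]
      refine ⟨hGood0, isUnit_one, fun i j => by simp, fun σ => ?_⟩
      rw [TateSenAux.mapS_one, Matrix.mul_one, Matrix.one_mul]
    | succ n ih =>
      obtain ⟨hq1, hq2, hq3, hq4⟩ := hstp n (f n).1 ih.1
      rw [hfs n]
      refine ⟨hq3, ih.2.1.mul hq1, ?_, ?_⟩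
      · intro i j
        have hdec : (f n).2 * (stp n (f n).1).1 - 1 =
            (f n).2 * ((stp n (f n).1).1 - 1) + ((f n).2 - 1) := by
          rw [Matrix.mul_sub, Matrix.mul_one]
          abel
        rw [hdec, Matrix.add_apply]
        refine Ideal.add_mem _ ?_ (ih.2.2.1 i j)
        exact Ideal.pow_le_pow_right (by omega)
          (TateSenAux.entry_mul_right _ _ hq2 i j)
      · intro σ
        rw [TateSenAux.mapS_mul, ← Matrix.mul_assoc, ih.2.2.2 σ, Matrix.mul_assoc, hq4 σ,
          ← Matrix.mul_assoc]
  have hdiff : ∀ n, ∀ i j, ((f (n + 1)).2 - (f n).2) i j ∈ I ^ (a + n) := by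
    intro n i j
    obtain ⟨hq1, hq2, hq3, hq4⟩ := hstp n (f n).1 (hInv n).1
    rw [hfs n]
    show ((f n).2 * (stp n (f n).1).1 - (f n).2) i j ∈ _
    have hdec : (f n).2 * (stp n (f n).1).1 - (f n).2 =
        (f n).2 * ((stp n (f n).1).1 - 1) := by
      rw [Matrix.mul_sub, Matrix.mul_one]
    rw [hdec]
    exact TateSenAux.entry_mul_right _ _ hq2 i j
  have hPs : ∀ m n, m ≤ n → ∀ i j, ((f n).2 - (f m).2) i j ∈ I ^ (a + m) := by
    intro m n hmn
    induction n, hmn using Nat.le_induction with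
    | base => intro i j; simp
    | succ n hmn ih =>
      intro i j
      have hdec : (f (n + 1)).2 - (f m).2 = ((f (n + 1)).2 - (f n).2) + ((f n).2 - (f m).2) := by
        abel
      rw [hdec, Matrix.add_apply]
      exact Ideal.add_mem _ (Ideal.pow_le_pow_right (by omega) (hdiff n i j)) (ih i j)
  have hsmultop : ∀ n : ℕ, (I ^ n • ⊤ : Submodule St St) = (I ^ n : Ideal St) := fun n => by
    rw [Ideal.smul_eq_mul, Ideal.mul_top]
  -- the limit
  have hlim : ∀ i j, ∃ L : St, ∀ n, (f n).2 i j ≡ L [SMOD (I ^ n • ⊤ : Submodule St St)] := by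
    intro i j
    refine IsPrecomplete.prec (inferInstance : IsPrecomplete I St) ?_
    intro m n hmn
    rw [SModEq.sub_mem, hsmultop]
    have h1 := hPs m n hmn i j
    have h2 : (f m).2 i j - (f n).2 i j = -(((f n).2 - (f m).2) i j) := by
      rw [Matrix.sub_apply]; ring
    rw [h2]
    exact neg_mem (Ideal.pow_le_pow_right (by omega) h1)
  choose L hL using hlim
  set Mf : Matrix (Fin d) (Fin d) St := Matrix.of L with hMfdef
  have hclose : ∀ n i j, (Mf - (f n).2) i j ∈ I ^ n := by
    intro n i j
    have h1 := hL i j n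
    rw [SModEq.sub_mem, hsmultop] at h1
    have h2 : (Mf - (f n).2) i j = -((f n).2 i j - L i j) := by
      rw [Matrix.sub_apply, neg_sub, hMfdef]
      rfl
    rw [h2]
    exact neg_mem h1
  have hMfnear : ∀ i j, (Mf - 1) i j ∈ I ^ a := by
    intro i j
    have hdec : Mf - 1 = (Mf - (f a).2) + ((f a).2 - 1) := by abel
    rw [hdec, Matrix.add_apply]
    exact Ideal.add_mem _ (hclose a i j) ((hInv a).2.2.1 i j)
  have hMfunit : IsUnit Mf :=
    TateSenAux.isUnit_of_entries I Mf fun i j => Ideal.pow_le_self (by omega) (hMfnear i j)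
  have hMfdet : IsUnit Mf.det := (Matrix.isUnit_iff_isUnit_det Mf).mp hMfunit
  -- the cocycle fixes Mf
  have hfix : ∀ σ : H, U σ * Mf.map (σ • ·) = Mf := by
    intro σ
    have hzero : ∀ i j, (U σ * Mf.map (σ • ·) - Mf) i j = 0 := by
      intro i j
      refine IsHausdorff.haus (inferInstance : IsHausdorff I St) _ ?_
      intro k
      rw [SModEq.zero, hsmultop]
      obtain ⟨m, hm⟩ := hstab k
      set n := max m k with hn
      have hkn : k ≤ n := le_max_right m k
      have hmn : m ≤ n := le_max_left m k
      have hdec : U σ * Mf.map (σ • ·) - Mf =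
          U σ * ((Mf - (f n).2).map (σ • ·)) + ((f n).2 * ((f n).1 σ - 1)) + ((f n).2 - Mf) := by
        rw [TateSenAux.mapS_sub, Matrix.mul_sub, Matrix.mul_sub, Matrix.mul_one,
          (hInv n).2.2.2 σ]
        abel
      rw [hdec, Matrix.add_apply, Matrix.add_apply]
      refine Ideal.add_mem _ (Ideal.add_mem _ ?_ ?_) ?_
      · refine TateSenAux.entry_mul_right _ _ (fun i' j' => ?_) i j
        rw [Matrix.map_apply]
        exact hm σ _ (Ideal.pow_le_pow_right hmn (hclose n i' j'))
      · refine Ideal.pow_le_pow_right (hkn.trans (Nat.le_add_left n a)) ?_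
        exact TateSenAux.entry_mul_right _ _ (fun i' j' => (hInv n).1.2.2.2 σ i' j') i j
      · have h2 : ((f n).2 - Mf) i j = -((Mf - (f n).2) i j) := by
          rw [Matrix.sub_apply, Matrix.sub_apply]; ring
        rw [h2]
        exact neg_mem (Ideal.pow_le_pow_right hkn (hclose n i j))
    have hz : U σ * Mf.map (σ • ·) - Mf = 0 := by
      ext i j
      simpa using hzero i j
    rw [sub_eq_zero] at hz
    exact hz
  refine ⟨Mf, hMfunit, fun i j => Ideal.pow_le_pow_right (Nat.sub_le a l1) (hMfnear i j),
    fun σ => ?_⟩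
  rw [Matrix.mul_assoc, hfix σ, Matrix.nonsing_inv_mul _ hMfdet]
end
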